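/- Fix r ≥ 1 with r < 4. The ordinary generating function S(z) = Σ_{n≥0} |S_{n,r}(3412)| z^n is not algebraic, given that there exist constants c, C > 0 with c·9^n/n^{4−r} ≤ |S_{n,r}(3412)| ≤ C·9^n/n^{4−r} for all large n. -/

import Mathlib

/-- `f` is an occurrence of the pattern `q` in the permutation `p`:
a strictly increasing choice of positions whose entries are order-isomorphic to `q`. -/
def IsOcc {k n : ℕ} (q : Equiv.Perm (Fin k)) (p : Equiv.Perm (Fin n))
    (f : Fin k → Fin n) : Prop :=
  (∀ i j : Fin k, i < j → f i < f j) ∧ ∀ i j : Fin k, q i < q j ↔ p (f i) < p (f j)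

instance {k n : ℕ} (q : Equiv.Perm (Fin k)) (p : Equiv.Perm (Fin n)) :
    DecidablePred (IsOcc q p) := fun f => by unfold IsOcc; infer_instance

/-- The number of occurrences of the pattern `q` in `p`. -/
def numOcc {k n : ℕ} (q : Equiv.Perm (Fin k)) (p : Equiv.Perm (Fin n)) : ℕ :=
  Fintype.card {f : Fin k → Fin n // IsOcc q p f}

/-- The number of permutations of length `n` avoiding `q`, i.e. `|S_n(q)|`. -/
def avoidersCard (n : ℕ) {k : ℕ} (q : Equiv.Perm (Fin k)) : ℕ :=
  Fintype.card {p : Equiv.Perm (Fin n) // numOcc q p = 0}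

/-- The number of permutations of length `n` with exactly `r` occurrences of `q`,
i.e. `|S_{n,r}(q)|`. -/
def occCard (n r : ℕ) {k : ℕ} (q : Equiv.Perm (Fin k)) : ℕ :=
  Fintype.card {p : Equiv.Perm (Fin n) // numOcc q p = r}

noncomputable def pat231 : Equiv.Perm (Fin 3) := Equiv.ofBijective ![1, 2, 0] (by decide)
noncomputable def pat321 : Equiv.Perm (Fin 3) := Equiv.ofBijective ![2, 1, 0] (by decide)
noncomputable def pat3412 : Equiv.Perm (Fin 4) := Equiv.ofBijective ![2, 3, 0, 1] (by decide)
noncomputable def pat4321 : Equiv.Perm (Fin 4) := Equiv.ofBijective ![3, 2, 1, 0] (by decide)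
noncomputable def pat4213 : Equiv.Perm (Fin 4) := Equiv.ofBijective ![3, 1, 0, 2] (by decide)
noncomputable def pat2413 : Equiv.Perm (Fin 4) := Equiv.ofBijective ![1, 3, 0, 2] (by decide)
noncomputable def pat3142 : Equiv.Perm (Fin 4) := Equiv.ofBijective ![2, 0, 3, 1] (by decide)

open Filter


open Filter Finset

noncomputable def Ev (φ : PowerSeries ℝ) (t : ℝ) : ℝ := ∑' n, PowerSeries.coeff n φ * t ^ n

def SummAt (φ : PowerSeries ℝ) (t : ℝ) : Prop :=
  Summable fun n => ‖PowerSeries.coeff n φ * t ^ n‖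

lemma summAt_mul {φ ψ : PowerSeries ℝ} {t : ℝ} (hφ : SummAt φ t) (hψ : SummAt ψ t) :
    SummAt (φ * ψ) t := by
  have key := summable_norm_sum_mul_antidiagonal_of_summable_norm hφ hψ
  refine key.congr fun n => ?_
  congr 1
  rw [PowerSeries.coeff_mul, Finset.sum_mul]
  refine Finset.sum_congr rfl fun kl hkl => ?_
  rw [Finset.HasAntidiagonal.mem_antidiagonal] at hkl
  rw [← hkl, pow_add]; ring

lemma ev_mul {φ ψ : PowerSeries ℝ} {t : ℝ} (hφ : SummAt φ t) (hψ : SummAt ψ t) :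
    Ev (φ * ψ) t = Ev φ t * Ev ψ t := by
  unfold Ev
  rw [tsum_mul_tsum_eq_tsum_sum_antidiagonal_of_summable_norm hφ hψ]
  refine tsum_congr fun n => ?_
  rw [PowerSeries.coeff_mul, Finset.sum_mul]
  refine Finset.sum_congr rfl fun kl hkl => ?_
  rw [Finset.HasAntidiagonal.mem_antidiagonal] at hkl
  rw [← hkl, pow_add]; ring

lemma summAt_one {t : ℝ} : SummAt 1 t := by
  apply summable_of_ne_finset_zero (s := {0})
  intro n hn
  simp only [Finset.mem_singleton] at hn
  simp [PowerSeries.coeff_one, hn]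

lemma ev_one {t : ℝ} : Ev 1 t = 1 := by
  unfold Ev
  rw [tsum_eq_single 0]
  · simp
  · intro n hn; simp [PowerSeries.coeff_one, hn]

lemma summAt_pow {φ : PowerSeries ℝ} {t : ℝ} (hφ : SummAt φ t) (i : ℕ) : SummAt (φ ^ i) t := by
  induction i with
  | zero => simpa using summAt_one
  | succ n ih => rw [pow_succ]; exact summAt_mul ih hφ

lemma ev_pow {φ : PowerSeries ℝ} {t : ℝ} (hφ : SummAt φ t) (i : ℕ) :
    Ev (φ ^ i) t = (Ev φ t) ^ i := by
  induction i with
  | zero => simpa using ev_one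
  | succ n ih => rw [pow_succ, ev_mul (summAt_pow hφ n) hφ, ih, pow_succ]

lemma summAt_C (p : Polynomial ℝ) (t : ℝ) :
    SummAt (Polynomial.coeToPowerSeries.ringHom p) t := by
  apply summable_of_ne_finset_zero (s := Finset.range (p.natDegree + 1))
  intro n hn
  simp only [Finset.mem_range, not_lt] at hn
  have : p.coeff n = 0 := p.coeff_eq_zero_of_natDegree_lt (by omega)
  simp [Polynomial.coeToPowerSeries.ringHom_apply, Polynomial.coeff_coe, this]

lemma ev_C (p : Polynomial ℝ) (t : ℝ) :
    Ev (Polynomial.coeToPowerSeries.ringHom p) t = p.eval t := by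
  unfold Ev
  rw [tsum_eq_sum (s := Finset.range (p.natDegree + 1)), Polynomial.eval_eq_sum_range]
  · refine Finset.sum_congr rfl fun n _ => ?_
    simp [Polynomial.coeToPowerSeries.ringHom_apply, Polynomial.coeff_coe]
  · intro n hn
    simp only [Finset.mem_range, not_lt] at hn
    have : p.coeff n = 0 := p.coeff_eq_zero_of_natDegree_lt (by omega)
    simp [Polynomial.coeToPowerSeries.ringHom_apply, Polynomial.coeff_coe, this]

lemma summAt_add {φ ψ : PowerSeries ℝ} {t : ℝ} (hφ : SummAt φ t) (hψ : SummAt ψ t) :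
    SummAt (φ + ψ) t := by
  refine Summable.of_nonneg_of_le ?_ ?_ (hφ.add hψ)
  · intro n; exact norm_nonneg _
  · intro n; rw [map_add, add_mul]; exact norm_add_le _ _

lemma ev_add {φ ψ : PowerSeries ℝ} {t : ℝ} (hφ : SummAt φ t) (hψ : SummAt ψ t) :
    Ev (φ + ψ) t = Ev φ t + Ev ψ t := by
  unfold Ev
  rw [← Summable.tsum_add hφ.of_norm hψ.of_norm]
  exact tsum_congr fun n => by rw [map_add, add_mul]

lemma ev_finsum {s : Finset ℕ} {Φ : ℕ → PowerSeries ℝ} {t : ℝ}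
    (h : ∀ i ∈ s, SummAt (Φ i) t) :
    Ev (∑ i ∈ s, Φ i) t = ∑ i ∈ s, Ev (Φ i) t ∧ SummAt (∑ i ∈ s, Φ i) t := by
  classical
  induction s using Finset.induction with
  | empty =>
      constructor
      · unfold Ev; simp
      · unfold SummAt; simp [summable_zero]
  | @insert a s ha ih =>
      obtain ⟨ih1, ih2⟩ := ih (fun i hi => h i (Finset.mem_insert_of_mem hi))
      have ha' : SummAt (Φ a) t := h a (Finset.mem_insert_self a s)
      rw [Finset.sum_insert ha, Finset.sum_insert ha]
      exact ⟨by rw [ev_add ha' ih2, ih1], summAt_add ha' ih2⟩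

/-- Main part-B lemma: evaluating an algebraic relation. -/
lemma ev_relation (P : Polynomial (Polynomial ℝ)) (f : PowerSeries ℝ) (t : ℝ)
    (hf : SummAt f t)
    (hP : Polynomial.eval₂ Polynomial.coeToPowerSeries.ringHom f P = 0) :
    Polynomial.eval₂ (Polynomial.evalRingHom t) (Ev f t) P = 0 := by
  have expand : Polynomial.eval₂ Polynomial.coeToPowerSeries.ringHom f P
      = ∑ i ∈ Finset.range (P.natDegree + 1),
          Polynomial.coeToPowerSeries.ringHom (P.coeff i) * f ^ i :=
    Polynomial.eval₂_eq_sum_range _ _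
  have hsumm : ∀ i ∈ Finset.range (P.natDegree + 1),
      SummAt (Polynomial.coeToPowerSeries.ringHom (P.coeff i) * f ^ i) t :=
    fun i _ => summAt_mul (summAt_C _ t) (summAt_pow hf i)
  have := (ev_finsum hsumm).1
  rw [← expand, hP] at this
  have hz : Ev 0 t = 0 := by unfold Ev; simp
  rw [hz] at this
  rw [Polynomial.eval₂_eq_sum_range]
  refine Eq.trans ?_ this.symm
  refine Finset.sum_congr rfl fun i _ => ?_
  rw [ev_mul (summAt_C _ t) (summAt_pow hf i), ev_C, ev_pow hf]
  simp

open Filter Finset Polynomial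

lemma coreLemma (x₀ : ℝ) (Q : Polynomial (Polynomial ℝ)) (hQ : Q ≠ 0) (g : ℝ → ℝ)
    (hrel : ∀ᶠ t in nhdsWithin x₀ (Set.Iio x₀),
      Polynomial.eval₂ (Polynomial.evalRingHom t) (g t) Q = 0)
    (hinf : Tendsto g (nhdsWithin x₀ (Set.Iio x₀)) atTop)
    (hsub : ∀ b : ℕ, Tendsto (fun t => (x₀ - t) * g t ^ b)
      (nhdsWithin x₀ (Set.Iio x₀)) (nhds 0)) : False := by
  classical
  set l := nhdsWithin x₀ (Set.Iio x₀) with hl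
  set d := Q.natDegree with hd
  set S : Finset ℕ := (Finset.range (d + 1)).filter (fun i => Q.coeff i ≠ 0) with hSdef
  have hdS : d ∈ S := by
    rw [hSdef]
    refine Finset.mem_filter.mpr ⟨Finset.self_mem_range_succ d, ?_⟩
    exact Polynomial.leadingCoeff_ne_zero.mpr hQ
  have hS : S.Nonempty := ⟨d, hdS⟩
  set m : ℕ → ℕ := fun i => Polynomial.rootMultiplicity x₀ (Q.coeff i) with hm
  set m₀ := S.inf' hS m with hm₀
  set T : Finset ℕ := S.filter (fun i => m i = m₀) with hTdef
  have hT : T.Nonempty := by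
    obtain ⟨i, hiS, hieq⟩ := Finset.exists_mem_eq_inf' hS m
    exact ⟨i, Finset.mem_filter.mpr ⟨hiS, hieq.symm⟩⟩
  set I := T.max' hT with hI
  have hIT : I ∈ T := T.max'_mem hT
  have hIS : I ∈ S := (Finset.mem_filter.mp hIT).1
  have hImI : m I = m₀ := (Finset.mem_filter.mp hIT).2
  have hIne : Q.coeff I ≠ 0 := (Finset.mem_filter.mp hIS).2
  have hm₀min : ∀ j ∈ S, m₀ ≤ m j := fun j hj => Finset.inf'_le m hj
  -- u i
  set u : ℕ → Polynomial ℝ := fun i => (Q.coeff i) /ₘ ((X - C x₀) ^ (m i)) with hu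
  have hu_eq : ∀ i, (X - C x₀) ^ (m i) * u i = Q.coeff i := fun i =>
    Polynomial.pow_mul_divByMonic_rootMultiplicity_eq (Q.coeff i) x₀
  have hu_ne : ∀ i, Q.coeff i ≠ 0 → (u i).eval x₀ ≠ 0 := fun i hi =>
    Polynomial.eval_divByMonic_pow_rootMultiplicity_ne_zero x₀ hi
  set cI : ℝ := |(u I).eval x₀| with hcI
  have hcIpos : 0 < cI := abs_pos.mpr (hu_ne I hIne)
  set ε : ℝ := 1 / (2 * (d + 1)) with hε
  have hεpos : 0 < ε := by positivity
  -- eval decomposition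
  have heval : ∀ i t, (Q.coeff i).eval t = (t - x₀) ^ (m i) * (u i).eval t := by
    intro i t
    conv_lhs => rw [← hu_eq i]
    simp [Polynomial.eval_pow]
  -- eventual base facts
  have hev_lt : ∀ᶠ t in l, t < x₀ := eventually_mem_nhdsWithin.mono fun t ht => ht
  have hev_near : ∀ᶠ t in l, x₀ - 1 < t := by
    have : ∀ᶠ t in nhds x₀, x₀ - 1 < t := eventually_gt_nhds (by linarith)
    exact this.filter_mono nhdsWithin_le_nhds
  have hg1 : ∀ᶠ t in l, 1 ≤ g t := hinf.eventually_ge_atTop 1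
  have huI : ∀ᶠ t in l, cI / 2 ≤ |(u I).eval t| := by
    have htend : Tendsto (fun t => |(u I).eval t|) l (nhds cI) :=
      (((u I).continuous.abs.tendsto x₀).mono_left nhdsWithin_le_nhds)
    exact htend.eventually_const_le (by linarith)
  -- per-j smallness
  have hsmall : ∀ j ∈ S, j ≠ I → ∀ᶠ t in l,
      |(Q.coeff j).eval t * g t ^ j| ≤ ε * |(Q.coeff I).eval t * g t ^ I| := by
    intro j hjS hjI
    set cj : ℝ := |(u j).eval x₀| with hcj
    set β : ℝ := ε * (cI / 2) / (2 * cj + 1) with hβ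
    have hcjnn : 0 ≤ cj := abs_nonneg _
    have hβpos : 0 < β := by positivity
    have huj : ∀ᶠ t in l, |(u j).eval t| ≤ 2 * cj + 1 := by
      have htend : Tendsto (fun t => |(u j).eval t|) l (nhds cj) :=
        (((u j).continuous.abs.tendsto x₀).mono_left nhdsWithin_le_nhds)
      exact htend.eventually_le_const (by linarith)
    -- the key quantitative eventual fact: δ^{m j} * g^j ≤ β * δ^{m I} * g^I
    have hkey : ∀ᶠ t in l, (x₀ - t) ^ (m j) * g t ^ j ≤ β * ((x₀ - t) ^ (m I) * g t ^ I) := by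
      have hmIj : m I ≤ m j := hImI ▸ hm₀min j hjS
      rcases eq_or_lt_of_le hmIj with hmeq | hmlt
      · -- m j = m I hence j < I
        have hjT : j ∈ T := Finset.mem_filter.mpr ⟨hjS, by rw [← hmeq, hImI]⟩
        have hjle : j ≤ I := T.le_max' j hjT
        have hjlt : j < I := lt_of_le_of_ne hjle hjI
        filter_upwards [hg1, hev_lt, hinf.eventually_ge_atTop (1 / β + 1)] with t h1 hlt hgb
        have hδpos : (0:ℝ) < x₀ - t := by linarith
        have hgpow : 1 / β ≤ g t ^ (I - j) := by
          calc 1 / β ≤ g t := by linarith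
          _ = g t ^ 1 := (pow_one _).symm
          _ ≤ g t ^ (I - j) := pow_le_pow_right₀ h1 (by omega)
        have : g t ^ j * (1 / β) ≤ g t ^ j * g t ^ (I - j) :=
          mul_le_mul_of_nonneg_left hgpow (by positivity)
        rw [← pow_add] at this
        have hIj : j + (I - j) = I := by omega
        rw [hIj] at this
        rw [← hmeq]
        calc (x₀ - t) ^ m I * g t ^ j = (x₀ - t) ^ m I * (g t ^ j * (1/β) * β) := by
              field_simp
          _ ≤ (x₀ - t) ^ m I * (g t ^ I * β) := by
              apply mul_le_mul_of_nonneg_left _ (by positivity)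
              exact mul_le_mul_of_nonneg_right this (le_of_lt hβpos)
          _ = β * ((x₀ - t) ^ m I * g t ^ I) := by ring
      · -- m I < m j
        rcases le_or_gt j I with hjle | hjgt
        · filter_upwards [hg1, hev_lt, hev_near,
            ((hsub 0).eventually_le_const hβpos).mono (fun t ht => ht)] with t h1 hlt hnear hβle
          have hδpos : (0:ℝ) < x₀ - t := by linarith
          have hδlt1 : x₀ - t < 1 := by linarith
          simp only [pow_zero, mul_one] at hβle
          have h1' : (x₀ - t) ^ m j ≤ (x₀ - t) ^ (m I) * (x₀ - t) := by
            have : (x₀ - t) ^ m j = (x₀ - t) ^ (m I) * (x₀ - t) ^ (m j - m I) := by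
              rw [← pow_add]; congr 1; omega
            rw [this]
            apply mul_le_mul_of_nonneg_left _ (by positivity)
            calc (x₀ - t) ^ (m j - m I) ≤ (x₀ - t) ^ 1 :=
                  pow_le_pow_of_le_one (le_of_lt hδpos) (le_of_lt hδlt1) (by omega)
              _ = x₀ - t := pow_one _
          have h2' : g t ^ j ≤ g t ^ I := pow_le_pow_right₀ h1 hjle
          calc (x₀ - t) ^ m j * g t ^ j ≤ ((x₀ - t) ^ (m I) * (x₀ - t)) * g t ^ I := by
                apply mul_le_mul h1' h2' (by positivity)
                positivity
            _ = (x₀ - t) * ((x₀ - t) ^ (m I) * g t ^ I) := by ring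
            _ ≤ β * ((x₀ - t) ^ (m I) * g t ^ I) := by
                apply mul_le_mul_of_nonneg_right hβle
                positivity
        · -- I < j
          filter_upwards [hg1, hev_lt, hev_near,
            (hsub (j - I)).eventually_le_const hβpos] with t h1 hlt hnear hβle
          have hδpos : (0:ℝ) < x₀ - t := by linarith
          have hδlt1 : x₀ - t < 1 := by linarith
          have h1' : (x₀ - t) ^ m j ≤ (x₀ - t) ^ (m I) * (x₀ - t) := by
            have : (x₀ - t) ^ m j = (x₀ - t) ^ (m I) * (x₀ - t) ^ (m j - m I) := by
              rw [← pow_add]; congr 1; omega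
            rw [this]
            apply mul_le_mul_of_nonneg_left _ (by positivity)
            calc (x₀ - t) ^ (m j - m I) ≤ (x₀ - t) ^ 1 :=
                  pow_le_pow_of_le_one (le_of_lt hδpos) (le_of_lt hδlt1) (by omega)
              _ = x₀ - t := pow_one _
          have hsplit : g t ^ j = g t ^ (j - I) * g t ^ I := by
            rw [← pow_add]; congr 1; omega
          calc (x₀ - t) ^ m j * g t ^ j
              ≤ ((x₀ - t) ^ (m I) * (x₀ - t)) * (g t ^ (j - I) * g t ^ I) := by
                rw [hsplit]
                apply mul_le_mul_of_nonneg_right h1' (by positivity)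
            _ = ((x₀ - t) * g t ^ (j - I)) * ((x₀ - t) ^ (m I) * g t ^ I) := by ring
            _ ≤ β * ((x₀ - t) ^ (m I) * g t ^ I) := by
                apply mul_le_mul_of_nonneg_right hβle
                positivity
    -- combine with u bounds
    filter_upwards [hkey, huj, huI, hg1, hev_lt] with t hk huj' huI' h1 hlt
    have hδpos : (0:ℝ) < x₀ - t := by linarith
    have hgpos : (0:ℝ) < g t := by linarith
    have habs : ∀ i, |(Q.coeff i).eval t * g t ^ i|
        = (x₀ - t) ^ (m i) * |(u i).eval t| * g t ^ i := by
      intro i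
      rw [heval i t, abs_mul, abs_mul, abs_pow, abs_sub_comm, abs_of_pos hδpos,
        abs_pow, abs_of_pos hgpos]
    rw [habs j, habs I]
    calc (x₀ - t) ^ m j * |(u j).eval t| * g t ^ j
        ≤ (x₀ - t) ^ m j * (2 * cj + 1) * g t ^ j := by
          apply mul_le_mul_of_nonneg_right _ (by positivity)
          exact mul_le_mul_of_nonneg_left huj' (by positivity)
      _ = (2 * cj + 1) * ((x₀ - t) ^ m j * g t ^ j) := by ring
      _ ≤ (2 * cj + 1) * (β * ((x₀ - t) ^ (m I) * g t ^ I)) := by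
          apply mul_le_mul_of_nonneg_left hk (by positivity)
      _ = ε * (cI / 2) * ((x₀ - t) ^ (m I) * g t ^ I) := by
          rw [hβ]; field_simp
      _ ≤ ε * ((x₀ - t) ^ (m I) * |(u I).eval t| * g t ^ I) := by
          have : cI / 2 * ((x₀ - t) ^ (m I) * g t ^ I)
              ≤ |(u I).eval t| * ((x₀ - t) ^ (m I) * g t ^ I) :=
            mul_le_mul_of_nonneg_right huI' (by positivity)
          calc ε * (cI / 2) * ((x₀ - t) ^ (m I) * g t ^ I)
              = ε * (cI / 2 * ((x₀ - t) ^ (m I) * g t ^ I)) := by ring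
            _ ≤ ε * (|(u I).eval t| * ((x₀ - t) ^ (m I) * g t ^ I)) :=
                mul_le_mul_of_nonneg_left this (le_of_lt hεpos)
            _ = ε * ((x₀ - t) ^ (m I) * |(u I).eval t| * g t ^ I) := by ring
  -- combine all j
  have hall : ∀ᶠ t in l, ∀ j ∈ S, j ≠ I →
      |(Q.coeff j).eval t * g t ^ j| ≤ ε * |(Q.coeff I).eval t * g t ^ I| := by
    refine (Filter.eventually_all_finset S).mpr ?_
    intro j hj
    by_cases hjI : j = I
    · simp [hjI]
    · exact (hsmall j hj hjI).mono fun t ht _ => ht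
  have hfinal : ∀ᶠ t in l, False := by
    filter_upwards [hall, hrel, hg1, hev_lt, huI] with t hallt hrelt h1 hlt huI'
    have hδpos : (0:ℝ) < x₀ - t := by linarith
    have hgpos : (0:ℝ) < g t := by linarith
    set TI : ℝ := (Q.coeff I).eval t * g t ^ I with hTI
    have hTIpos : 0 < |TI| := by
      rw [hTI, heval I t, abs_mul, abs_mul, abs_pow, abs_sub_comm, abs_of_pos hδpos,
        abs_pow, abs_of_pos hgpos]
      have : 0 < |(u I).eval t| := by linarith [hcIpos]
      positivity
    -- the sum relation
    have hsum : ∑ i ∈ Finset.range (d + 1), (Q.coeff i).eval t * g t ^ i = 0 := by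
      have := hrelt
      rw [Polynomial.eval₂_eq_sum_range] at this
      simpa using this
    have hIrange : I ∈ Finset.range (d + 1) := by
      rw [hSdef] at hIS; exact (Finset.mem_filter.mp hIS).1
    have hTIeq : TI = -∑ i ∈ (Finset.range (d + 1)).erase I, (Q.coeff i).eval t * g t ^ i := by
      have := Finset.add_sum_erase _ (fun i => (Q.coeff i).eval t * g t ^ i) hIrange
      rw [hsum] at this
      linarith [this]
    have hbound : |TI| ≤ ((Finset.range (d+1)).erase I).card * (ε * |TI|) := by
      have habsTI : |TI| = |∑ i ∈ (Finset.range (d + 1)).erase I, (Q.coeff i).eval t * g t ^ i| := by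
        rw [hTIeq, abs_neg]
      calc |TI| = |∑ i ∈ (Finset.range (d + 1)).erase I, (Q.coeff i).eval t * g t ^ i| := habsTI
        _ ≤ ∑ i ∈ (Finset.range (d + 1)).erase I, |(Q.coeff i).eval t * g t ^ i| :=
            Finset.abs_sum_le_sum_abs _ _
        _ ≤ ∑ _i ∈ (Finset.range (d + 1)).erase I, (ε * |TI|) := by
            apply Finset.sum_le_sum
            intro i hi
            by_cases hiS : i ∈ S
            · exact hallt i hiS (Finset.ne_of_mem_erase hi)
            · have : Q.coeff i = 0 := by
                by_contra hne
                exact hiS (Finset.mem_filter.mpr ⟨Finset.mem_of_mem_erase hi, hne⟩)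
              rw [this]
              simp only [Polynomial.eval_zero, zero_mul, abs_zero]
              positivity
        _ = ((Finset.range (d+1)).erase I).card * (ε * |TI|) := by
            rw [Finset.sum_const, nsmul_eq_mul]
    have hcard : (((Finset.range (d+1)).erase I).card : ℝ) ≤ (d + 1 : ℝ) := by
      have : ((Finset.range (d+1)).erase I).card ≤ (Finset.range (d+1)).card :=
        Finset.card_le_card (Finset.erase_subset _ _)
      rw [Finset.card_range] at this
      exact_mod_cast this
    have : |TI| ≤ (d+1 : ℝ) * (ε * |TI|) := by
      calc |TI| ≤ ((Finset.range (d+1)).erase I).card * (ε * |TI|) := hbound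
        _ ≤ (d+1 : ℝ) * (ε * |TI|) := by
            apply mul_le_mul_of_nonneg_right hcard
            positivity
    rw [hε] at this
    have h2 : |TI| ≤ |TI| / 2 := by
      have hd1 : (0:ℝ) < d + 1 := by positivity
      calc |TI| ≤ (d+1 : ℝ) * (1 / (2 * (d + 1)) * |TI|) := this
        _ = |TI| / 2 := by field_simp
    linarith
  -- l is not trivial
  have : l.NeBot := by
    rw [hl]
    infer_instance
  obtain ⟨t, ht⟩ := hfinal.exists
  exact ht

open Filter Finset

-- L10
lemma summable_of_eventually_bound {f g : ℕ → ℝ} (N : ℕ)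
    (h : ∀ n, N ≤ n → ‖f n‖ ≤ g n) (hg : Summable g) : Summable f := by
  rw [← summable_nat_add_iff N]
  apply Summable.of_norm
  refine Summable.of_nonneg_of_le (fun n => norm_nonneg _) (fun n => h (n + N) (by omega)) ?_
  exact (summable_nat_add_iff N).mpr hg

-- L1
lemma exp_neg_le_rpow {x α : ℝ} (hx : 0 < x) (hα : 0 < α) (hα1 : α ≤ 1) :
    Real.exp (-x) ≤ x ^ (-α) := by
  have h1 : x ^ α ≤ Real.exp x := by
    rw [Real.rpow_def_of_pos hx]
    apply Real.exp_le_exp.mpr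
    rcases le_or_gt (Real.log x) 0 with h | h
    · nlinarith
    · nlinarith [Real.log_le_sub_one_of_pos hx]
  rw [Real.rpow_neg (le_of_lt hx), Real.exp_neg]
  apply inv_anti₀ _ h1
  positivity

-- L2
lemma pow_le_exp_neg {s : ℝ} (hs0 : 0 ≤ s) (hs1 : s < 1) (n : ℕ) :
    s ^ n ≤ Real.exp (-((n:ℝ) * (1 - s))) := by
  have h1 : s ≤ Real.exp (-(1-s)) := by
    have := Real.add_one_le_exp (-(1-s))
    linarith
  calc s ^ n ≤ (Real.exp (-(1-s))) ^ n := pow_le_pow_left₀ hs0 h1 n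
    _ = Real.exp (-((n:ℝ) * (1 - s))) := by
        rw [← Real.exp_nat_mul]; ring_nf

-- L3 (Bernoulli)
lemma bernoulli_low {s : ℝ} (hs0 : 0 ≤ s) (hs1 : s ≤ 1) (n : ℕ) :
    1 - s ^ n ≤ (n:ℝ) * (1 - s) := by
  have := one_add_mul_le_pow (a := s - 1) (by linarith) n
  have h : 1 + (n:ℝ) * (s - 1) ≤ s ^ n := by
    calc 1 + (n:ℝ) * (s - 1) ≤ (1 + (s-1)) ^ n := this
      _ = s ^ n := by ring_nf
  linarith

-- L4
lemma pow_le_quad {s : ℝ} (hs0 : 0 ≤ s) (hs1 : s ≤ 1) (n : ℕ) :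
    s ^ n ≤ 1 - (n:ℝ) * (1 - s) + (n:ℝ)^2 * (1 - s)^2 := by
  induction n with
  | zero => simp
  | succ n ih =>
      have hstep : s ^ (n+1) = s ^ n * s := by ring
      have h2 : s ^ n * s ≤ (1 - (n:ℝ) * (1 - s) + (n:ℝ)^2 * (1-s)^2) * s := by
        apply mul_le_mul_of_nonneg_right ih hs0
      rw [hstep]
      refine le_trans h2 ?_
      push_cast
      nlinarith [sq_nonneg (1 - s), sq_nonneg ((n:ℝ) * (1-s))]

-- L5
lemma le_rpow_one_sub {x a α : ℝ} (hx1 : x ≤ 1) (hxa : x ≤ a) (ha : 0 < a)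
    (hα : 0 < α) (hα1 : α ≤ 1) : x ≤ a ^ ((1:ℝ) - α) := by
  rcases le_or_gt a 1 with h | h
  · calc x ≤ a := hxa
      _ = a ^ (1:ℝ) := (Real.rpow_one a).symm
      _ ≤ a ^ ((1:ℝ) - α) := Real.rpow_le_rpow_of_exponent_ge ha h (by linarith)
  · calc x ≤ 1 := hx1
      _ = a ^ (0:ℝ) := (Real.rpow_zero a).symm
      _ ≤ a ^ ((1:ℝ) - α) := Real.rpow_le_rpow_of_exponent_le (le_of_lt h) (by linarith)

-- L6
lemma le_rpow_two_sub {x a α : ℝ} (hx1 : x ≤ a) (hxa : x ≤ a^2) (ha : 0 < a)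
    (hα : 0 < α) (hα1 : α ≤ 1) : x ≤ a ^ ((2:ℝ) - α) := by
  rcases le_or_gt a 1 with h | h
  · calc x ≤ a^2 := hxa
      _ = a ^ (2:ℝ) := by rw [← Real.rpow_natCast a 2]; norm_num
      _ ≤ a ^ ((2:ℝ) - α) := Real.rpow_le_rpow_of_exponent_ge ha h (by linarith)
  · calc x ≤ a := hx1
      _ = a ^ (1:ℝ) := (Real.rpow_one a).symm
      _ ≤ a ^ ((2:ℝ) - α) := Real.rpow_le_rpow_of_exponent_le (le_of_lt h) (by linarith)

-- L7
lemma geom_identity (s : ℝ) (n : ℕ) : (1 - s) * ∑ j ∈ Finset.range n, s ^ j = 1 - s ^ n := by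
  have := geom_sum_mul s n
  nlinarith [this]

-- L8
lemma geom_identity2 (s : ℝ) (n : ℕ) :
    (1 - s)^2 * ∑ j ∈ Finset.range n, ∑ i ∈ Finset.range j, s ^ i
      = (n:ℝ) * (1 - s) - (1 - s ^ n) := by
  have h1 : (1 - s) * ∑ j ∈ Finset.range n, ∑ i ∈ Finset.range j, s ^ i
      = (n:ℝ) - ∑ j ∈ Finset.range n, s ^ j := by
    rw [Finset.mul_sum]
    have : ∀ j ∈ Finset.range n, (1-s) * ∑ i ∈ Finset.range j, s ^ i = 1 - s ^ j :=
      fun j _ => geom_identity s j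
    rw [Finset.sum_congr rfl this]
    rw [Finset.sum_sub_distrib]
    simp
  have h2 : (1 - s)^2 * ∑ j ∈ Finset.range n, ∑ i ∈ Finset.range j, s ^ i
      = (1-s) * ((1 - s) * ∑ j ∈ Finset.range n, ∑ i ∈ Finset.range j, s ^ i) := by ring
  rw [h2, h1, mul_sub, geom_identity s n]
  ring

-- L9 divergence
lemma tendsto_harmonic_partial (c : ℝ) (hc : 0 < c) (M₂ : ℕ) (hM₂ : 1 ≤ M₂) (f : ℕ → ℝ)
    (hge : ∀ n, M₂ ≤ n → c / (n:ℝ) ≤ f n) :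
    Tendsto (fun M => ∑ n ∈ Finset.Ico M₂ M, f n) atTop atTop := by
  have hH : Tendsto (fun M => ∑ n ∈ Finset.range M, (1:ℝ)/n) atTop atTop := by
    have base := Real.tendsto_sum_range_one_div_nat_succ_atTop
    rw [← tendsto_add_atTop_iff_nat 1]
    refine base.congr fun M => ?_
    rw [Finset.sum_range_succ']
    simp
  have hH2 : Tendsto (fun M => c * (∑ n ∈ Finset.range M, (1:ℝ)/n
      - ∑ n ∈ Finset.range M₂, (1:ℝ)/n)) atTop atTop := by
    apply Tendsto.const_mul_atTop hc
    exact tendsto_atTop_add_const_right _ _ hH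
  apply tendsto_atTop_mono' _ _ hH2
  filter_upwards [eventually_ge_atTop M₂] with M hM
  have hsplit : ∑ n ∈ Finset.range M, (1:ℝ)/n - ∑ n ∈ Finset.range M₂, (1:ℝ)/n
      = ∑ n ∈ Finset.Ico M₂ M, (1:ℝ)/n := by
    exact (Finset.sum_Ico_eq_sub _ hM).symm
  rw [hsplit, Finset.mul_sum]
  apply Finset.sum_le_sum
  intro n hn
  rw [Finset.mem_Ico] at hn
  have : c * (1/(n:ℝ)) = c / n := by ring
  rw [this]
  exact hge n hn.1

lemma summable_shift {f : ℕ → ℝ} (N : ℕ) (h : Summable f) : Summable (fun j => f (j + N)) :=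
  (summable_nat_add_iff (f := f) N).mpr h
set_option maxHeartbeats 1000000000
lemma engine (a : ℕ → ℝ) (hnn : ∀ n, 0 ≤ a n) (c C : ℝ) (hc : 0 < c) (hC : 0 < C)
    (N : ℕ) (hN : 1 ≤ N) (k : ℕ) (hk1 : 1 ≤ k)
    (hlow : ∀ n, N ≤ n → c / (n:ℝ)^k ≤ a n / 9^n)
    (hhigh : ∀ n, N ≤ n → a n / 9^n ≤ C / (n:ℝ)^k)
    (V : ℕ → ℝ → ℝ)
    (hV0 : ∀ n s, 0 ≤ s → s ≤ 1 → 0 ≤ V n s)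
    (hV1 : ∀ n s, 0 ≤ s → s ≤ 1 → V n s ≤ (n:ℝ)^(k-1))
    (hVb : ∀ α : ℝ, 0 < α → α ≤ 1 → ∀ n : ℕ, 1 ≤ n → ∀ s : ℝ, 0 < s → s < 1 →
        V n s ≤ (n:ℝ)^(k-1) * ((n:ℝ)*(1-s)) ^ (-α))
    (hVlim : ∀ n : ℕ, Filter.Tendsto (fun t : ℝ => V n (9*t))
        (nhdsWithin (1/9 : ℝ) (Set.Iio (1/9 : ℝ))) (nhds (V n 1)))
    (hVone : ∀ n : ℕ, 2 ≤ n → 1/(4*(n:ℝ)) ≤ V n 1 / (n:ℝ)^k)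
    (ℓ e : Polynomial ℝ) (he : e ≠ 0)
    (hFg : ∀ t : ℝ, 0 < t → t < 1/9 →
        Ev (PowerSeries.mk a) t = ℓ.eval t + e.eval t * (∑' n, (a n / 9^n) * V n (9*t)))
    (P : Polynomial (Polynomial ℝ)) (hP : P ≠ 0)
    (hrel0 : Polynomial.eval₂ Polynomial.coeToPowerSeries.ringHom (PowerSeries.mk a) P = 0) :
    False := by
  classical
  set x₀ : ℝ := 1/9 with hx₀
  set l := nhdsWithin x₀ (Set.Iio x₀) with hldef
  set b : ℕ → ℝ := fun n => a n / 9^n with hbdef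
  have hb0 : ∀ n, 0 ≤ b n := fun n => div_nonneg (hnn n) (by positivity)
  set g : ℝ → ℝ := fun t => ∑' n, b n * V n (9*t) with hgdef
  set N' : ℕ := max N 1 with hN'
  -- window facts
  have hev0 : ∀ᶠ t in l, 0 < t := by
    have : ∀ᶠ t in nhds x₀, 0 < t := eventually_gt_nhds (by norm_num [hx₀])
    exact this.filter_mono nhdsWithin_le_nhds
  have hevlt : ∀ᶠ t in l, t < x₀ := eventually_mem_nhdsWithin.mono fun t ht => ht
  -- key termwise bound
  have keybd : ∀ (α:ℝ), 0 < α → α ≤ 1 → ∀ (t:ℝ), 0 < t → t < x₀ → ∀ n, N' ≤ n →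
      b n * V n (9*t) ≤ (C * (1-9*t) ^ (-α)) * ((n:ℝ) ^ ((1:ℝ)+α))⁻¹ := by
    intro α hα hα1 t ht0 ht1 n hn
    have hn1 : 1 ≤ n := le_trans (le_max_right N 1) hn
    have hnN : N ≤ n := le_trans (le_max_left N 1) hn
    have hnR : (0:ℝ) < n := by exact_mod_cast hn1
    have hs0 : 0 < 9*t := by linarith
    have hs1 : 9*t < 1 := by rw [hx₀] at ht1; linarith
    have hδ : 0 < 1 - 9*t := by linarith
    have hVle := hVb α hα hα1 n hn1 (9*t) hs0 hs1
    have hble := hhigh n hnN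
    have hVnn : 0 ≤ V n (9*t) := hV0 n (9*t) (le_of_lt hs0) (le_of_lt hs1)
    have step1 : b n * V n (9*t) ≤ (C / (n:ℝ)^k) * ((n:ℝ)^(k-1) * ((n:ℝ)*(1-9*t)) ^ (-α)) := by
      apply mul_le_mul hble hVle hVnn
      positivity
    refine le_trans step1 (le_of_eq ?_)
    have hsplit : ((n:ℝ)*(1-9*t)) ^ (-α) = (n:ℝ)^(-α) * (1-9*t)^(-α) :=
      Real.mul_rpow (le_of_lt hnR) (le_of_lt hδ)
    have hpowk : (n:ℝ)^k = (n:ℝ)^(k-1) * n := by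
      rw [← pow_succ]
      congr 1
      omega
    have hr1 : (n:ℝ) ^ ((1:ℝ)+α) = n * (n:ℝ)^α := by
      rw [Real.rpow_add hnR, Real.rpow_one]
    have hneg : (n:ℝ)^(-α) = ((n:ℝ)^α)⁻¹ := Real.rpow_neg (le_of_lt hnR) α
    rw [hsplit, hpowk, hr1, hneg]
    have hpk1 : (n:ℝ)^(k-1) ≠ 0 := by positivity
    have hpα : ((n:ℝ):ℝ)^α ≠ 0 := by
      have := Real.rpow_pos_of_pos hnR α
      exact ne_of_gt this
    field_simp
  have hgnn : ∀ t, 0 < t → t < x₀ → ∀ n, 0 ≤ b n * V n (9*t) := by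
    intro t ht0 ht1 n
    have hs1 : 9*t < 1 := by rw [hx₀] at ht1; linarith
    exact mul_nonneg (hb0 n) (hV0 n (9*t) (by linarith) (le_of_lt hs1))
  have hZsum : ∀ α:ℝ, 0 < α → Summable (fun n:ℕ => ((n:ℝ)^((1:ℝ)+α))⁻¹) := by
    intro α hα
    have := Real.summable_one_div_nat_rpow.mpr (show (1:ℝ) < 1 + α by linarith)
    refine this.congr fun n => ?_
    rw [one_div]
  have hgsum : ∀ t, 0 < t → t < x₀ → Summable (fun n => b n * V n (9*t)) := by
    intro t ht0 ht1
    apply summable_of_eventually_bound N'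
      (g := fun n => (C * (1-9*t)^(-(1/2:ℝ))) * ((n:ℝ)^((1:ℝ)+(1/2:ℝ)))⁻¹)
    · intro n hn
      rw [Real.norm_of_nonneg (hgnn t ht0 ht1 n)]
      exact keybd (1/2) (by norm_num) (by norm_num) t ht0 ht1 n hn
    · exact (hZsum (1/2) (by norm_num)).mul_left _
  -- upper bound
  have hupper : ∀ α:ℝ, 0 < α → α ≤ 1 →
      ∃ K:ℝ, 0 < K ∧ ∀ t, 0 < t → t < x₀ → g t ≤ K * (1-9*t)^(-α) := by
    intro α hα hα1
    set Z : ℝ := ∑' (n:ℕ), ((n:ℝ)^((1:ℝ)+α))⁻¹ with hZdef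
    have hZsum' := hZsum α hα
    have hZ0 : 0 ≤ Z := tsum_nonneg fun n => by positivity
    set D : ℝ := ∑ n ∈ Finset.range N', b n * (n:ℝ)^(k-1) with hDdef
    have hD0 : 0 ≤ D := Finset.sum_nonneg fun n _ => mul_nonneg (hb0 n) (by positivity)
    refine ⟨D + C*Z + 1, by positivity, ?_⟩
    intro t ht0 ht1
    have hs1 : 9*t < 1 := by rw [hx₀] at ht1; linarith
    have hδ : 0 < 1 - 9*t := by linarith
    have hδ1 : 1 - 9*t ≤ 1 := by linarith
    have hone_le : 1 ≤ (1-9*t)^(-α) :=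
      Real.one_le_rpow_of_pos_of_le_one_of_nonpos hδ hδ1 (by linarith)
    have hsummg := hgsum t ht0 ht1
    have hsplit := Summable.sum_add_tsum_nat_add (f := fun n => b n * V n (9*t)) N' hsummg
    have hhead : ∑ n ∈ Finset.range N', b n * V n (9*t) ≤ D := by
      apply Finset.sum_le_sum
      intro n _
      exact mul_le_mul_of_nonneg_left (hV1 n (9*t) (by linarith) (le_of_lt hs1)) (hb0 n)
    have htail : ∑' (j:ℕ), b (j+N') * V (j+N') (9*t) ≤ C * (1-9*t)^(-α) * Z := by
      have hb2 : Summable (fun j:ℕ => (C * (1-9*t)^(-α)) * (((j+N':ℕ):ℝ)^((1:ℝ)+α))⁻¹) :=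
        (summable_shift N' hZsum').mul_left _
      calc ∑' (j:ℕ), b (j+N') * V (j+N') (9*t)
          ≤ ∑' (j:ℕ), (C * (1-9*t)^(-α)) * (((j+N':ℕ):ℝ)^((1:ℝ)+α))⁻¹ := by
            apply Summable.tsum_le_tsum _ (summable_shift N' hsummg) hb2
            intro j
            exact keybd α hα hα1 t ht0 ht1 (j+N') (by omega)
        _ = (C * (1-9*t)^(-α)) * ∑' (j:ℕ), (((j+N':ℕ):ℝ)^((1:ℝ)+α))⁻¹ := tsum_mul_left
        _ ≤ (C * (1-9*t)^(-α)) * Z := by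
            apply mul_le_mul_of_nonneg_left _ (by positivity)
            apply (summable_shift N' hZsum').tsum_le_tsum_of_inj (fun j => j + N') (add_left_injective N')
              (fun m _ => by positivity) (fun j => le_refl _)
              hZsum'
    have hgt : g t = (∑ n ∈ Finset.range N', b n * V n (9*t))
        + ∑' (j:ℕ), b (j+N') * V (j+N') (9*t) := hsplit.symm
    rw [hgt]
    have e1 : D ≤ D * ((1-9*t)^(-α)) := le_mul_of_one_le_right hD0 hone_le
    have e2 : (0:ℝ) < (1-9*t)^(-α) := by positivity
    nlinarith [htail, hhead]
  -- lower bound: tendsto atTop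
  have hinf : Filter.Tendsto g l Filter.atTop := by
    rw [Filter.tendsto_atTop]
    intro K
    set M₂ : ℕ := max N 2 with hM₂def
    have hge : ∀ n, M₂ ≤ n → (c/4) / (n:ℝ) ≤ b n * V n 1 := by
      intro n hn
      have hnN : N ≤ n := le_trans (le_max_left N 2) hn
      have hn2 : 2 ≤ n := le_trans (le_max_right N 2) hn
      have hnR : (0:ℝ) < n := by positivity
      have h1 : c / (n:ℝ)^k ≤ b n := hlow n hnN
      have h2 : (1:ℝ)/(4*n) ≤ V n 1 / (n:ℝ)^k := hVone n hn2
      have hVnn : 0 ≤ V n 1 := hV0 n 1 (by norm_num) (le_refl 1)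
      calc (c/4) / (n:ℝ) = c * (1/(4*n)) := by ring
        _ ≤ c * (V n 1 / (n:ℝ)^k) := mul_le_mul_of_nonneg_left h2 (le_of_lt hc)
        _ = (c / (n:ℝ)^k) * V n 1 := by ring
        _ ≤ b n * V n 1 := mul_le_mul_of_nonneg_right h1 hVnn
    have hdiv := tendsto_harmonic_partial (c/4) (by positivity) M₂ (by omega)
      (fun n => b n * V n 1) hge
    obtain ⟨M, hM⟩ := (hdiv.eventually_ge_atTop (K+1)).exists
    have htendS : Filter.Tendsto (fun t => ∑ n ∈ Finset.Ico M₂ M, b n * V n (9*t)) l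
        (nhds (∑ n ∈ Finset.Ico M₂ M, b n * V n 1)) := by
      apply tendsto_finset_sum
      intro n _
      exact ((hVlim n).const_mul (b n))
    have hev2 : ∀ᶠ t in l, K < ∑ n ∈ Finset.Ico M₂ M, b n * V n (9*t) :=
      htendS.eventually_const_lt (by linarith)
    filter_upwards [hev2, hev0, hevlt] with t h2 h0t hlt
    have hsum := hgsum t h0t hlt
    have : ∑ n ∈ Finset.Ico M₂ M, b n * V n (9*t) ≤ g t :=
      hsum.sum_le_tsum _ (fun i _ => hgnn t h0t hlt i)
    linarith
  -- subpolynomial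
  have hsub : ∀ bb : ℕ, Filter.Tendsto (fun t => (x₀ - t) * g t ^ bb) l (nhds 0) := by
    intro bb
    set α : ℝ := 1/((bb:ℝ)+1) with hαdef
    have hα : 0 < α := by positivity
    have hα1 : α ≤ 1 := by
      rw [hαdef, div_le_one (by positivity)]
      have : (0:ℝ) ≤ bb := by positivity
      linarith
    obtain ⟨K, hK, hKle⟩ := hupper α hα hα1
    set γ : ℝ := 1 - α * bb with hγdef
    have hγ : 0 < γ := by
      rw [hγdef, hαdef]
      have hbb : (0:ℝ) < (bb:ℝ) + 1 := by positivity
      have : (1:ℝ)/((bb:ℝ)+1) * bb = bb/((bb:ℝ)+1) := by ring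
      rw [this, sub_pos, div_lt_one hbb]
      linarith
    have hmaj : Filter.Tendsto (fun t => ((9:ℝ)^(-(α*(bb:ℝ))) * K^bb) * (x₀ - t)^γ) l (nhds 0) := by
      have h0 : Filter.Tendsto (fun t : ℝ => x₀ - t) l (nhds 0) := by
        have hcont : Filter.Tendsto (fun t : ℝ => x₀ - t) (nhds x₀) (nhds (x₀ - x₀)) :=
          (continuous_const.sub continuous_id).tendsto x₀
        rw [sub_self] at hcont
        exact hcont.mono_left nhdsWithin_le_nhds
      have h1 : Filter.Tendsto (fun x:ℝ => x^γ) (nhds 0) (nhds 0) := by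
        have := (Real.continuousAt_rpow_const 0 γ (Or.inr (le_of_lt hγ))).tendsto
        rwa [Real.zero_rpow (ne_of_gt hγ)] at this
      have := (h1.comp h0).const_mul ((9:ℝ)^(-(α*(bb:ℝ))) * K^bb)
      simpa using this
    apply squeeze_zero' _ _ hmaj
    · filter_upwards [hev0, hevlt] with t h0t hlt
      have : 0 ≤ g t := tsum_nonneg (hgnn t h0t hlt)
      have h1 : 0 ≤ x₀ - t := by linarith
      positivity
    · filter_upwards [hev0, hevlt] with t h0t hlt
      have hδpos : 0 < x₀ - t := by linarith
      have hδeq : 1 - 9*t = 9*(x₀ - t) := by rw [hx₀]; ring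
      have hgle := hKle t h0t hlt
      have hgnn' : 0 ≤ g t := tsum_nonneg (hgnn t h0t hlt)
      have hp1 : g t ^ bb ≤ (K * (1-9*t)^(-α))^bb := pow_le_pow_left₀ hgnn' hgle bb
      have hδ9 : (0:ℝ) < 1 - 9*t := by rw [hδeq]; linarith
      have hrw : (K * (1-9*t)^(-α))^bb = K^bb * ((1-9*t)^(-α))^bb := mul_pow _ _ _
      have hrw2 : ((1-9*t)^(-α))^bb = (1-9*t)^(-(α*(bb:ℝ))) := by
        rw [← Real.rpow_natCast ((1-9*t)^(-α)) bb, ← Real.rpow_mul (le_of_lt hδ9)]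
        ring_nf
      have hrw3 : (1-9*t)^(-(α*(bb:ℝ))) = (9:ℝ)^(-(α*(bb:ℝ))) * (x₀ - t)^(-(α*(bb:ℝ))) := by
        rw [hδeq]
        exact Real.mul_rpow (by norm_num) (le_of_lt hδpos)
      have hrw4 : (x₀ - t) * (x₀ - t)^(-(α*(bb:ℝ))) = (x₀ - t)^γ := by
        have : γ = 1 + (-(α*(bb:ℝ))) := by rw [hγdef]; ring
        rw [this, Real.rpow_add hδpos, Real.rpow_one]
      calc (x₀ - t) * g t ^ bb ≤ (x₀ - t) * (K^bb * ((9:ℝ)^(-(α*(bb:ℝ))) * (x₀ - t)^(-(α*(bb:ℝ))))) := by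
            apply mul_le_mul_of_nonneg_left _ (le_of_lt hδpos)
            rw [hrw, hrw2, hrw3] at hp1
            exact hp1
        _ = ((9:ℝ)^(-(α*(bb:ℝ))) * K^bb) * ((x₀ - t) * (x₀ - t)^(-(α*(bb:ℝ)))) := by ring
        _ = ((9:ℝ)^(-(α*(bb:ℝ))) * K^bb) * (x₀ - t)^γ := by rw [hrw4]
  -- algebraic relation for g
  set q1 : Polynomial (Polynomial ℝ) := Polynomial.C ℓ + Polynomial.C e * Polynomial.X with hq1
  set Q : Polynomial (Polynomial ℝ) := P.comp q1 with hQdef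
  have hQ0 : Q ≠ 0 := by
    rw [hQdef]
    intro hcontra
    rcases Polynomial.comp_eq_zero_iff.mp hcontra with h | ⟨_, h2⟩
    · exact hP h
    · apply he
      have hcoeff := congrArg (fun p => Polynomial.coeff p 1) h2
      simpa [hq1] using hcoeff
  have hrel : ∀ᶠ t in l, Polynomial.eval₂ (Polynomial.evalRingHom t) (g t) Q = 0 := by
    filter_upwards [hev0, hevlt] with t h0t hlt
    have hs1 : 9*t < 1 := by rw [hx₀] at hlt; linarith
    have hSf : SummAt (PowerSeries.mk a) t := by
      apply summable_of_eventually_bound N' (g := fun n => C * (9*t)^n)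
      · intro n hn
        have hn1 : 1 ≤ n := le_trans (le_max_right N 1) hn
        have hnN : N ≤ n := le_trans (le_max_left N 1) hn
        have hnk : (1:ℝ) ≤ (n:ℝ)^k := one_le_pow₀ (by exact_mod_cast hn1)
        have hcast : PowerSeries.coeff n (PowerSeries.mk a) = a n := PowerSeries.coeff_mk n a
        have hpos : 0 ≤ a n * t ^ n := mul_nonneg (hnn n) (by positivity)
        have h9 : a n * t^n = (a n / 9^n) * (9*t)^n := by
          rw [mul_pow]
          field_simp
        rw [hcast, Real.norm_of_nonneg hpos, h9,
          Real.norm_of_nonneg (mul_nonneg (div_nonneg (hnn n) (by positivity)) (by positivity))]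
        have h2 := hhigh n hnN
        have h3 : a n / 9^n ≤ C := by
          calc a n / 9^n ≤ C / (n:ℝ)^k := h2
            _ ≤ C := by
              rw [div_le_iff₀ (by positivity)]
              nlinarith
        apply mul_le_mul_of_nonneg_right h3 (by positivity)
      · exact (summable_geometric_of_lt_one (by positivity) hs1).mul_left C
    have h0 := ev_relation P _ t hSf hrel0
    have hEv := hFg t h0t (by rw [hx₀] at hlt; exact hlt)
    rw [hQdef, Polynomial.eval₂_comp]
    have hq1eval : Polynomial.eval₂ (Polynomial.evalRingHom t) (g t) q1
        = ℓ.eval t + e.eval t * g t := by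
      simp [hq1]
    rw [hq1eval]
    have hgF : Ev (PowerSeries.mk a) t = ℓ.eval t + e.eval t * g t := hEv
    rw [← hgF]
    exact h0
  exact coreLemma x₀ Q hQ0 g hrel hinf hsub
set_option maxHeartbeats 1000000

lemma caseK1 (a : ℕ → ℝ) (hnn : ∀ n, 0 ≤ a n) (c C : ℝ) (hc : 0 < c) (hC : 0 < C)
    (N : ℕ) (hN : 1 ≤ N)
    (hlow : ∀ n, N ≤ n → c / (n:ℝ)^1 ≤ a n / 9^n)
    (hhigh : ∀ n, N ≤ n → a n / 9^n ≤ C / (n:ℝ)^1)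
    (P : Polynomial (Polynomial ℝ)) (hP : P ≠ 0)
    (hrel0 : Polynomial.eval₂ Polynomial.coeToPowerSeries.ringHom (PowerSeries.mk a) P = 0) :
    False := by
  apply engine a hnn c C hc hC N hN 1 (le_refl 1) hlow hhigh (fun n s => s ^ n)
    ?hV0 ?hV1 ?hVb ?hVlim ?hVone 0 1 one_ne_zero ?hFg P hP hrel0
  case hV0 => intro n s hs0 _; positivity
  case hV1 =>
    intro n s hs0 hs1
    simpa using pow_le_one₀ hs0 hs1
  case hVb =>
    intro α hα hα1 n hn1 s hs0 hs1
    have hnR : (0:ℝ) < n := by exact_mod_cast hn1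
    have ha : 0 < (n:ℝ) * (1 - s) := by nlinarith
    have h1 := pow_le_exp_neg (le_of_lt hs0) hs1 n
    have h2 := exp_neg_le_rpow ha hα hα1
    simpa using le_trans h1 h2
  case hVlim =>
    intro n
    have hcont : Filter.Tendsto (fun t : ℝ => (9*t)^n) (nhds (1/9 : ℝ))
        (nhds ((9*(1/9 : ℝ))^n)) :=
      ((continuous_const.mul continuous_id).pow n).tendsto (1/9 : ℝ)
    have h9 : ((9:ℝ)*(1/9 : ℝ))^n = (1:ℝ)^n := by norm_num
    rw [h9] at hcont
    exact hcont.mono_left nhdsWithin_le_nhds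
  case hVone =>
    intro n hn2
    have hnR : (0:ℝ) < n := by exact_mod_cast Nat.lt_of_lt_of_le (by norm_num) hn2
    show (1:ℝ)/(4*(n:ℝ)) ≤ (1:ℝ)^n / (n:ℝ)^1
    rw [one_pow, pow_one, div_le_div_iff₀ (by linarith) hnR]
    nlinarith
  case hFg =>
    intro t ht0 ht1
    simp only [Polynomial.eval_zero, Polynomial.eval_one, zero_add, one_mul]
    unfold Ev
    apply tsum_congr
    intro n
    rw [PowerSeries.coeff_mk, mul_pow]
    have h9 : (9:ℝ)^n ≠ 0 := by positivity
    field_simp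

lemma caseK2 (a : ℕ → ℝ) (hnn : ∀ n, 0 ≤ a n) (c C : ℝ) (hc : 0 < c) (hC : 0 < C)
    (N : ℕ) (hN : 1 ≤ N)
    (hlow : ∀ n, N ≤ n → c / (n:ℝ)^2 ≤ a n / 9^n)
    (hhigh : ∀ n, N ≤ n → a n / 9^n ≤ C / (n:ℝ)^2)
    (P : Polynomial (Polynomial ℝ)) (hP : P ≠ 0)
    (hrel0 : Polynomial.eval₂ Polynomial.coeToPowerSeries.ringHom (PowerSeries.mk a) P = 0) :
    False := by
  classical
  set b : ℕ → ℝ := fun n => a n / 9^n with hbdef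
  have hb0 : ∀ n, 0 ≤ b n := fun n => div_nonneg (hnn n) (by positivity)
  have hsumb : Summable b := by
    apply summable_of_eventually_bound N (g := fun n => C * ((n:ℝ)^2)⁻¹)
    · intro n hn
      rw [Real.norm_of_nonneg (hb0 n)]
      have := hhigh n hn
      rw [div_eq_mul_inv] at this
      exact this
    · exact (Real.summable_one_div_nat_pow.mpr one_lt_two).mul_left C |>.congr
        (fun n => by rw [one_div])
  set L : ℝ := ∑' n, b n with hLdef
  apply engine a hnn c C hc hC N hN 2 (by norm_num) hlow hhigh
    (fun n s => ∑ j ∈ Finset.range n, s ^ j)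
    ?hV0 ?hV1 ?hVb ?hVlim ?hVone (Polynomial.C L) (Polynomial.C 9 * Polynomial.X - 1)
    ?he ?hFg P hP hrel0
  case hV0 =>
    intro n s hs0 _
    exact Finset.sum_nonneg fun j _ => by positivity
  case hV1 =>
    intro n s hs0 hs1
    rw [pow_one]
    calc ∑ j ∈ Finset.range n, s ^ j ≤ ∑ j ∈ Finset.range n, 1 :=
          Finset.sum_le_sum fun j _ => pow_le_one₀ hs0 hs1
      _ = n := by simp
  case hVb =>
    intro α hα hα1 n hn1 s hs0 hs1
    have hnR : (0:ℝ) < n := by exact_mod_cast hn1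
    have hδ : 0 < 1 - s := by linarith
    have ha : 0 < (n:ℝ) * (1 - s) := by positivity
    have hW1 : 1 - s^n ≤ 1 := by
      have : 0 ≤ s^n := by positivity
      linarith
    have hW2 : 1 - s^n ≤ (n:ℝ) * (1-s) := bernoulli_low (le_of_lt hs0) (le_of_lt hs1) n
    have hWr : 1 - s^n ≤ ((n:ℝ)*(1-s)) ^ ((1:ℝ) - α) := le_rpow_one_sub hW1 hW2 ha hα hα1
    have hsplit : ((n:ℝ)*(1-s)) ^ ((1:ℝ) - α)
        = (1-s) * ((n:ℝ) * ((n:ℝ)*(1-s)) ^ (-α)) := by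
      rw [show (1:ℝ) - α = 1 + (-α) by ring, Real.rpow_add ha, Real.rpow_one]
      ring
    have hid := geom_identity s n
    have hkey : (1-s) * (∑ j ∈ Finset.range n, s ^ j)
        ≤ (1-s) * ((n:ℝ)^(2-1) * ((n:ℝ)*(1-s)) ^ (-α)) := by
      rw [hid, pow_one]
      rw [hsplit] at hWr
      exact hWr
    exact le_of_mul_le_mul_left hkey hδ
  case hVlim =>
    intro n
    have hcont : Filter.Tendsto (fun t : ℝ => ∑ j ∈ Finset.range n, (9*t)^j) (nhds (1/9 : ℝ))
        (nhds (∑ j ∈ Finset.range n, ((9:ℝ)*(1/9 : ℝ))^j)) :=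
      (Continuous.tendsto (by continuity) _)
    have h9 : ∑ j ∈ Finset.range n, ((9:ℝ)*(1/9 : ℝ))^j = ∑ j ∈ Finset.range n, (1:ℝ)^j := by
      norm_num
    rw [h9] at hcont
    exact hcont.mono_left nhdsWithin_le_nhds
  case hVone =>
    intro n hn2
    have hnR : (0:ℝ) < n := by exact_mod_cast Nat.lt_of_lt_of_le (by norm_num) hn2
    show (1:ℝ)/(4*(n:ℝ)) ≤ (∑ j ∈ Finset.range n, (1:ℝ)^j) / (n:ℝ)^2
    have hsum : ∑ j ∈ Finset.range n, (1:ℝ)^j = n := by simp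
    have hn2R : (2:ℝ) ≤ n := by exact_mod_cast hn2
    rw [hsum, div_le_div_iff₀ (by linarith) (pow_pos hnR 2)]
    have hsq : ((n:ℝ))^2 = n * n := sq (n:ℝ)
    nlinarith
  case he =>
    intro hcontra
    have h2 := congrArg (Polynomial.eval (0:ℝ)) hcontra
    simp at h2
  case hFg =>
    intro t ht0 ht1
    have hs0 : 0 < 9*t := by linarith
    have hs1 : 9*t < 1 := by linarith
    have hsumF : Summable (fun n => b n * (9*t)^n) := by
      apply summable_of_eventually_bound N (g := fun n => C * (9*t)^n)
      · intro n h
        rw [Real.norm_of_nonneg (mul_nonneg (hb0 n) (by positivity))]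
        apply mul_le_mul_of_nonneg_right _ (by positivity)
        calc b n ≤ C / (n:ℝ)^2 := hhigh n h
          _ ≤ C := by
            have hn1 : 1 ≤ n := le_trans hN h
            have hnR : (0:ℝ) < (n:ℝ) := by exact_mod_cast Nat.lt_of_lt_of_le one_pos hn1
            rw [div_le_iff₀ (pow_pos hnR 2)]
            have : (1:ℝ) ≤ (n:ℝ)^2 := one_le_pow₀ (by exact_mod_cast hn1)
            nlinarith
      · exact (summable_geometric_of_lt_one (by positivity) hs1).mul_left C
    have hEvF : Ev (PowerSeries.mk a) t = ∑' n, b n * (9*t)^n := by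
      unfold Ev
      apply tsum_congr
      intro n
      rw [PowerSeries.coeff_mk, mul_pow]
      have h9 : (9:ℝ)^n ≠ 0 := by positivity
      show a n * t ^ n = a n / 9^n * ((9:ℝ)^n * t^n)
      field_simp
    have hgeq : (1 - 9*t) * (∑' n, b n * ∑ j ∈ Finset.range n, (9*t)^j)
        = L - ∑' n, b n * (9*t)^n := by
      rw [← tsum_mul_left]
      have hterm : ∀ n:ℕ, (1-9*t) * (b n * ∑ j ∈ Finset.range n, (9*t)^j)
          = b n - b n * (9*t)^n := by
        intro n
        calc (1-9*t) * (b n * ∑ j ∈ Finset.range n, (9*t)^j)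
            = b n * ((1-9*t) * ∑ j ∈ Finset.range n, (9*t)^j) := by ring
          _ = b n * (1 - (9*t)^n) := by rw [geom_identity]
          _ = b n - b n * (9*t)^n := by ring
      rw [tsum_congr hterm, Summable.tsum_sub hsumb hsumF]
    have heval : Polynomial.eval t (Polynomial.C 9 * Polynomial.X - 1) = 9*t - 1 := by simp
    rw [hEvF, heval, Polynomial.eval_C]
    nlinarith [hgeq]


lemma caseK3 (a : ℕ → ℝ) (hnn : ∀ n, 0 ≤ a n) (c C : ℝ) (hc : 0 < c) (hC : 0 < C)
    (N : ℕ) (hN : 1 ≤ N)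
    (hlow : ∀ n, N ≤ n → c / (n:ℝ)^3 ≤ a n / 9^n)
    (hhigh : ∀ n, N ≤ n → a n / 9^n ≤ C / (n:ℝ)^3)
    (P : Polynomial (Polynomial ℝ)) (hP : P ≠ 0)
    (hrel0 : Polynomial.eval₂ Polynomial.coeToPowerSeries.ringHom (PowerSeries.mk a) P = 0) :
    False := by
  classical
  set b : ℕ → ℝ := fun n => a n / 9^n with hbdef
  have hb0 : ∀ n, 0 ≤ b n := fun n => div_nonneg (hnn n) (by positivity)
  have hC3 : ∀ n, N ≤ n → b n ≤ C / (n:ℝ)^3 := hhigh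
  have hsumb : Summable b := by
    apply summable_of_eventually_bound N (g := fun n => C * ((n:ℝ)^2)⁻¹)
    · intro n hn
      rw [Real.norm_of_nonneg (hb0 n)]
      have hn1 : 1 ≤ n := le_trans hN hn
      have hnR : (1:ℝ) ≤ (n:ℝ) := by exact_mod_cast hn1
      calc b n ≤ C / (n:ℝ)^3 := hhigh n hn
        _ ≤ C * ((n:ℝ)^2)⁻¹ := by
          rw [div_eq_mul_inv]
          apply mul_le_mul_of_nonneg_left _ (le_of_lt hC)
          apply inv_anti₀ (by positivity)
          nlinarith
    · exact (Real.summable_one_div_nat_pow.mpr one_lt_two).mul_left C |>.congr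
        (fun n => by rw [one_div])
  have hsumnb : Summable (fun n : ℕ => (n:ℝ) * b n) := by
    apply summable_of_eventually_bound N (g := fun n => C * ((n:ℝ)^2)⁻¹)
    · intro n hn
      have hn1 : 1 ≤ n := le_trans hN hn
      have hnR : (1:ℝ) ≤ (n:ℝ) := by exact_mod_cast hn1
      have hnpos : (0:ℝ) < n := by linarith
      rw [Real.norm_of_nonneg (mul_nonneg (by positivity) (hb0 n))]
      calc (n:ℝ) * b n ≤ (n:ℝ) * (C / (n:ℝ)^3) := by
            apply mul_le_mul_of_nonneg_left (hhigh n hn) (by positivity)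
        _ = C * ((n:ℝ)^2)⁻¹ := by
            field_simp
    · exact (Real.summable_one_div_nat_pow.mpr one_lt_two).mul_left C |>.congr
        (fun n => by rw [one_div])
  set L : ℝ := ∑' n, b n with hLdef
  set A : ℝ := ∑' (n : ℕ), (n:ℝ) * b n with hAdef
  apply engine a hnn c C hc hC N hN 3 (by norm_num) hlow hhigh
    (fun n s => ∑ j ∈ Finset.range n, ∑ i ∈ Finset.range j, s ^ i)
    ?hV0 ?hV1 ?hVb ?hVlim ?hVone
    (Polynomial.C L - Polynomial.C A * (1 - Polynomial.C 9 * Polynomial.X))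
    ((1 - Polynomial.C 9 * Polynomial.X)^2)
    ?he ?hFg P hP hrel0
  case hV0 =>
    intro n s hs0 _
    exact Finset.sum_nonneg fun j _ => Finset.sum_nonneg fun i _ => by positivity
  case hV1 =>
    intro n s hs0 hs1
    have h1 : ∀ j ∈ Finset.range n, ∑ i ∈ Finset.range j, s ^ i ≤ (n:ℝ) := by
      intro j hj
      rw [Finset.mem_range] at hj
      calc ∑ i ∈ Finset.range j, s ^ i ≤ ∑ i ∈ Finset.range j, 1 :=
            Finset.sum_le_sum fun i _ => pow_le_one₀ hs0 hs1
        _ = (j:ℝ) := by simp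
        _ ≤ (n:ℝ) := by exact_mod_cast le_of_lt hj
    calc ∑ j ∈ Finset.range n, ∑ i ∈ Finset.range j, s ^ i
        ≤ ∑ j ∈ Finset.range n, (n:ℝ) := Finset.sum_le_sum h1
      _ = (n:ℝ) * (n:ℝ) := by
          rw [Finset.sum_const, Finset.card_range]
          simp [mul_comm]
      _ = (n:ℝ)^(3-1) := by norm_num [sq]
  case hVb =>
    intro α hα hα1 n hn1 s hs0 hs1
    have hnR : (0:ℝ) < n := by exact_mod_cast hn1
    have hδ : 0 < 1 - s := by linarith
    have ha : 0 < (n:ℝ) * (1 - s) := by positivity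
    have hsn : 0 ≤ s^n := by positivity
    have hsn1 : s^n ≤ 1 := pow_le_one₀ (le_of_lt hs0) (le_of_lt hs1)
    have hW1 : (n:ℝ)*(1-s) - (1 - s^n) ≤ (n:ℝ) * (1-s) := by nlinarith
    have hquad := pow_le_quad (le_of_lt hs0) (le_of_lt hs1) n
    have hW2 : (n:ℝ)*(1-s) - (1 - s^n) ≤ ((n:ℝ) * (1-s))^2 := by nlinarith
    have hWr : (n:ℝ)*(1-s) - (1 - s^n) ≤ ((n:ℝ)*(1-s)) ^ ((2:ℝ) - α) :=
      le_rpow_two_sub hW1 hW2 ha hα hα1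
    have hsplit : ((n:ℝ)*(1-s)) ^ ((2:ℝ) - α)
        = (1-s)^2 * ((n:ℝ)^(3-1) * ((n:ℝ)*(1-s)) ^ (-α)) := by
      rw [show (2:ℝ) - α = 2 + (-α) by ring, Real.rpow_add ha]
      rw [show ((n:ℝ)*(1-s)) ^ (2:ℝ) = ((n:ℝ)*(1-s))^(2:ℕ) by
        rw [← Real.rpow_natCast ((n:ℝ)*(1-s)) 2]; norm_num]
      have : ((n:ℝ))^(3-1) = (n:ℝ)^(2:ℕ) := by norm_num
      rw [this]
      ring
    have hid := geom_identity2 s n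
    have hkey : (1-s)^2 * (∑ j ∈ Finset.range n, ∑ i ∈ Finset.range j, s ^ i)
        ≤ (1-s)^2 * ((n:ℝ)^(3-1) * ((n:ℝ)*(1-s)) ^ (-α)) := by
      rw [hid]
      rw [hsplit] at hWr
      exact hWr
    exact le_of_mul_le_mul_left hkey (by positivity)
  case hVlim =>
    intro n
    have hcont : Filter.Tendsto
        (fun t : ℝ => ∑ j ∈ Finset.range n, ∑ i ∈ Finset.range j, (9*t)^i) (nhds (1/9 : ℝ))
        (nhds (∑ j ∈ Finset.range n, ∑ i ∈ Finset.range j, ((9:ℝ)*(1/9 : ℝ))^i)) := by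
      apply Continuous.tendsto
      apply continuous_finset_sum
      intro j _
      apply continuous_finset_sum
      intro i _
      exact (continuous_const.mul continuous_id).pow i
    have h9 : ∑ j ∈ Finset.range n, ∑ i ∈ Finset.range j, ((9:ℝ)*(1/9 : ℝ))^i
        = ∑ j ∈ Finset.range n, ∑ i ∈ Finset.range j, (1:ℝ)^i := by norm_num
    rw [h9] at hcont
    exact hcont.mono_left nhdsWithin_le_nhds
  case hVone =>
    intro n hn2
    have hnR : (0:ℝ) < n := by exact_mod_cast Nat.lt_of_lt_of_le (by norm_num) hn2
    have hn2R : (2:ℝ) ≤ n := by exact_mod_cast hn2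
    show (1:ℝ)/(4*(n:ℝ))
        ≤ (∑ j ∈ Finset.range n, ∑ i ∈ Finset.range j, (1:ℝ)^i) / (n:ℝ)^3
    have hsum : ∑ j ∈ Finset.range n, ∑ i ∈ Finset.range j, (1:ℝ)^i
        = ∑ j ∈ Finset.range n, (j:ℝ) := by
      apply Finset.sum_congr rfl
      intro j _
      simp
    have hgauss : ∀ m:ℕ, ∑ j ∈ Finset.range m, (j:ℝ) = (m:ℝ)*((m:ℝ)-1)/2 := by
      intro m
      induction m with
      | zero => simp
      | succ p ih =>
          rw [Finset.sum_range_succ, ih]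
          push_cast
          ring
    rw [hsum, hgauss n, div_le_div_iff₀ (by linarith) (pow_pos hnR 3)]
    nlinarith [mul_nonneg (mul_nonneg hnR.le hnR.le) (show (0:ℝ) ≤ (n:ℝ)-2 by linarith)]
  case he =>
    intro hcontra
    have h2 := congrArg (Polynomial.eval (0:ℝ)) hcontra
    simp at h2
  case hFg =>
    intro t ht0 ht1
    have hs0 : 0 < 9*t := by linarith
    have hs1 : 9*t < 1 := by linarith
    have hsumF : Summable (fun n => b n * (9*t)^n) := by
      apply summable_of_eventually_bound N (g := fun n => C * (9*t)^n)
      · intro n h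
        rw [Real.norm_of_nonneg (mul_nonneg (hb0 n) (by positivity))]
        apply mul_le_mul_of_nonneg_right _ (by positivity)
        calc b n ≤ C / (n:ℝ)^3 := hhigh n h
          _ ≤ C := by
            have hn1 : 1 ≤ n := le_trans hN h
            have hnR : (0:ℝ) < (n:ℝ) := by exact_mod_cast Nat.lt_of_lt_of_le one_pos hn1
            rw [div_le_iff₀ (pow_pos hnR 3)]
            have : (1:ℝ) ≤ (n:ℝ)^3 := one_le_pow₀ (by exact_mod_cast hn1)
            nlinarith
      · exact (summable_geometric_of_lt_one (by positivity) hs1).mul_left C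
    have hEvF : Ev (PowerSeries.mk a) t = ∑' n, b n * (9*t)^n := by
      unfold Ev
      apply tsum_congr
      intro n
      rw [PowerSeries.coeff_mk, mul_pow]
      have h9 : (9:ℝ)^n ≠ 0 := by positivity
      show a n * t ^ n = a n / 9^n * ((9:ℝ)^n * t^n)
      field_simp
    have hgeq : (1 - 9*t)^2 * (∑' n, b n * ∑ j ∈ Finset.range n, ∑ i ∈ Finset.range j, (9*t)^i)
        = (1-9*t) * A - (L - ∑' n, b n * (9*t)^n) := by
      rw [← tsum_mul_left]
      have hterm : ∀ n:ℕ, (1-9*t)^2 * (b n * ∑ j ∈ Finset.range n, ∑ i ∈ Finset.range j, (9*t)^i)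
          = (1-9*t) * ((n:ℝ) * b n) - (b n - b n * (9*t)^n) := by
        intro n
        have hid := geom_identity2 (9*t) n
        calc (1-9*t)^2 * (b n * ∑ j ∈ Finset.range n, ∑ i ∈ Finset.range j, (9*t)^i)
            = b n * ((1-9*t)^2 * ∑ j ∈ Finset.range n, ∑ i ∈ Finset.range j, (9*t)^i) := by ring
          _ = b n * ((n:ℝ) * (1-9*t) - (1 - (9*t)^n)) := by rw [hid]
          _ = (1-9*t) * ((n:ℝ) * b n) - (b n - b n * (9*t)^n) := by ring
      rw [tsum_congr hterm]
      rw [Summable.tsum_sub (hsumnb.mul_left (1-9*t)) (hsumb.sub hsumF)]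
      rw [tsum_mul_left, Summable.tsum_sub hsumb hsumF]
    have heval1 : Polynomial.eval t
        (Polynomial.C L - Polynomial.C A * (1 - Polynomial.C 9 * Polynomial.X))
        = L - A * (1 - 9*t) := by simp
    have heval2 : Polynomial.eval t ((1 - Polynomial.C 9 * Polynomial.X)^2) = (1-9*t)^2 := by
      simp
    rw [hEvF, heval1, heval2]
    nlinarith [hgeq]

/-- Theorem 5.8: for `1 ≤ r < 4`, given `c, C > 0` with
`c 9^n / n^{4-r} ≤ |S_{n,r}(3412)| ≤ C 9^n / n^{4-r}` for all large `n`, the ordinary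
generating function of `|S_{n,r}(3412)|` is not algebraic. -/
theorem not_algebraic_3412 (r : ℕ) (hr : 1 ≤ r) (hr4 : r < 4)
    (h : ∃ c C : ℝ, 0 < c ∧ 0 < C ∧ ∀ᶠ n : ℕ in atTop,
      c * 9 ^ n / (n : ℝ) ^ (4 - r) ≤ (occCard n r pat3412 : ℝ) ∧
      (occCard n r pat3412 : ℝ) ≤ C * 9 ^ n / (n : ℝ) ^ (4 - r)) :
    ¬ ∃ P : Polynomial (Polynomial ℝ), P ≠ 0 ∧
        Polynomial.eval₂ Polynomial.coeToPowerSeries.ringHom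
          (PowerSeries.mk fun n => (occCard n r pat3412 : ℝ)) P = 0 := by
  rintro ⟨P, hP, hPrel⟩
  obtain ⟨c, C, hc, hC, hev⟩ := h
  obtain ⟨N₀, hN₀⟩ := Filter.eventually_atTop.mp hev
  set a : ℕ → ℝ := fun n => (occCard n r pat3412 : ℝ) with hadef
  have hnn : ∀ n, 0 ≤ a n := fun n => Nat.cast_nonneg _
  set N := max N₀ 1 with hNdef
  have hN1 : 1 ≤ N := le_max_right _ _
  have hlow : ∀ n, N ≤ n → c / (n:ℝ)^(4-r) ≤ a n / 9^n := by
    intro n hn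
    have hn1 : 1 ≤ n := le_trans hN1 hn
    have hnR : (0:ℝ) < (n:ℝ) := by exact_mod_cast Nat.lt_of_lt_of_le one_pos hn1
    have h9 : (0:ℝ) < 9^n := by positivity
    have hb := (hN₀ n (le_trans (le_max_left _ _) hn)).1
    rw [div_le_div_iff₀ (pow_pos hnR (4-r)) h9]
    rw [div_le_iff₀ (pow_pos hnR (4-r))] at hb
    linarith
  have hhigh : ∀ n, N ≤ n → a n / 9^n ≤ C / (n:ℝ)^(4-r) := by
    intro n hn
    have hn1 : 1 ≤ n := le_trans hN1 hn
    have hnR : (0:ℝ) < (n:ℝ) := by exact_mod_cast Nat.lt_of_lt_of_le one_pos hn1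
    have h9 : (0:ℝ) < 9^n := by positivity
    have hb := (hN₀ n (le_trans (le_max_left _ _) hn)).2
    rw [div_le_div_iff₀ h9 (pow_pos hnR (4-r))]
    rw [le_div_iff₀ (pow_pos hnR (4-r))] at hb
    linarith
  interval_cases r
  · exact caseK3 a hnn c C hc hC N hN1 hlow hhigh P hP hPrel
  · exact caseK2 a hnn c C hc hC N hN1 hlow hhigh P hP hPrel
  · exact caseK1 a hnn c C hc hC N hN1 hlow hhigh P hP hPrel
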